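/- For all regular expressions p and q over an alphabet Σ, there exists a natural number k such that every string w over Σ of length k has two distinct prefixes s₁ and s₂, with s₁ a strict prefix of s₂, satisfying L(δ_{s₁} p) = L(δ_{s₂} p) and L(δ_{s₁} q) = L(δ_{s₂} q). -/
import Mathlib


open RegularExpression Computability

variable {α : Type*}

/-- The derivative of a regular expression with respect to a string,
folding the Brzozowski character derivative over the string. -/
def derivs [DecidableEq α] (p : RegularExpression α) (w : List α) : RegularExpression α :=
  w.foldl RegularExpression.deriv p

/-- `w` is a counterexample for `p` and `q` if exactly one of them accepts `w`. -/
def Counterexample (p q : RegularExpression α) (w : List α) : Prop :=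
  Xor' (w ∈ p.matches') (w ∈ q.matches')

/-- A string `w` is reducible (for `p` and `q`) if `w = s ++ t ++ u` with `t` nonempty,
`L(δ_s p) = L(δ_{s++t} p)` and `L(δ_s q) = L(δ_{s++t} q)`. -/
def Reducible [DecidableEq α] (p q : RegularExpression α) (w : List α) : Prop :=
  ∃ s t u : List α, w = s ++ t ++ u ∧ t ≠ [] ∧
    (derivs p s).matches' = (derivs p (s ++ t)).matches' ∧
    (derivs q s).matches' = (derivs q (s ++ t)).matches'

/-- `Sync s p q` : `p` and `q` have no irreducible counterexample having `s` as a prefix. -/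
def Sync [DecidableEq α] (s : List α) (p q : RegularExpression α) : Prop :=
  ∀ w : List α, s <+: w → Counterexample p q w → Reducible p q w

/-- Left quotient of a language by a string. -/
def lquot (L : Language α) (w : List α) : Language α := {s | w ++ s ∈ L}

@[simp] lemma lquot_nil (L : Language α) : lquot L [] = L := rfl

lemma mem_lquot {L : Language α} {w s : List α} : s ∈ lquot L w ↔ w ++ s ∈ L := Iff.rfl

lemma lquot_append (L : Language α) (u v : List α) :
    lquot L (u ++ v) = lquot (lquot L u) v := by
  ext s; simp [mem_lquot, List.append_assoc]

lemma matches'_deriv [DecidableEq α] (p : RegularExpression α) (a : α) :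
    (p.deriv a).matches' = lquot p.matches' [a] := by
  ext s
  rw [mem_lquot, ← rmatch_iff_matches', ← rmatch_iff_matches', List.singleton_append, rmatch]

lemma matches'_derivs [DecidableEq α] (p : RegularExpression α) (w : List α) :
    (derivs p w).matches' = lquot p.matches' w := by
  induction w generalizing p with
  | nil => rfl
  | cons a w ih =>
      have h : derivs p (a :: w) = derivs (p.deriv a) w := rfl
      rw [h, ih, matches'_deriv, ← lquot_append]
      rfl

lemma mem_sSup_lang {T : Set (Language α)} {s : List α} :
    s ∈ sSup T ↔ ∃ K ∈ T, s ∈ K := Iff.rfl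

lemma lquot_add (L M : Language α) (w : List α) :
    lquot (L + M) w = lquot L w + lquot M w := by
  rfl

lemma lquot_mul (L M : Language α) (w : List α) :
    lquot (L * M) w = lquot L w * M +
      sSup {K | ∃ u v : List α, u ++ v = w ∧ u ∈ L ∧ K = lquot M v} := by
  ext s
  simp only [Language.mem_add, mem_lquot, Language.mem_mul, mem_sSup_lang]
  constructor
  · rintro ⟨x, hx, y, hy, hxy⟩
    rcases List.append_eq_append_iff.1 hxy with ⟨a', rfl, rfl⟩ | ⟨c', rfl, rfl⟩
    · right
      exact ⟨lquot M a', ⟨x, a', rfl, hx, rfl⟩, hy⟩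
    · left
      exact ⟨c', hx, y, hy, rfl⟩
  · rintro (⟨x, hx, y, hy, rfl⟩ | ⟨K, ⟨u, v, rfl, hu, rfl⟩, hs⟩)
    · exact ⟨w ++ x, hx, y, hy, by simp⟩
    · exact ⟨u, hu, v ++ s, hs, by simp⟩

lemma star_split (L : Language α) :
    ∀ S : List (List α), (∀ y ∈ S, y ∈ L) → ∀ w s : List α, w ≠ [] → w ++ s = S.flatten →
      ∃ u v s₁ s₂ : List α, u ++ v = w ∧ v ≠ [] ∧ u ∈ L∗ ∧ s = s₁ ++ s₂ ∧
        v ++ s₁ ∈ L ∧ s₂ ∈ L∗ := by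
  intro S
  induction S with
  | nil =>
      intro _ w s hw heq
      simp only [List.flatten_nil, List.append_eq_nil_iff] at heq
      exact absurd heq.1 hw
  | cons y S ih =>
      intro hmem w s hw heq
      rw [List.flatten_cons] at heq
      rcases List.append_eq_append_iff.1 heq with ⟨a', rfl, rfl⟩ | ⟨c', rfl, hc⟩
      · exact ⟨[], w, a', S.flatten, rfl, hw, Language.nil_mem_kstar L, rfl,
          hmem _ (by simp), Language.join_mem_kstar fun z hz => hmem _ (by simp [hz])⟩
      · rcases eq_or_ne c' [] with rfl | hc'
        · refine ⟨[], y, [], s, by simp, ?_, Language.nil_mem_kstar L, rfl, by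
            simpa using hmem y (by simp), ?_⟩
          · rintro rfl; simp at hw
          · rw [List.nil_append] at hc
            rw [← hc]
            exact Language.join_mem_kstar fun z hz => hmem _ (by simp [hz])
        · obtain ⟨u, v, s₁, s₂, huv, hv, hu, hs, h1, h2⟩ :=
            ih (fun z hz => hmem _ (by simp [hz])) c' s hc' hc.symm
          obtain ⟨Su, hSu, hSumem⟩ := Language.mem_kstar.1 hu
          refine ⟨y ++ u, v, s₁, s₂, by rw [List.append_assoc, huv], hv, ?_, hs, h1, h2⟩
          refine Language.mem_kstar.2 ⟨y :: Su, by simp [hSu], ?_⟩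
          intro z hz
          rcases List.mem_cons.1 hz with rfl | hz
          · exact hmem _ (by simp)
          · exact hSumem _ hz

lemma lquot_star (L : Language α) (a : α) (w : List α) :
    lquot (L∗) (a :: w) = sSup {K | ∃ u v : List α, u ++ v = a :: w ∧ v ≠ [] ∧ u ∈ L∗ ∧
      K = lquot L v * L∗} := by
  ext s
  simp only [mem_lquot, mem_sSup_lang]
  constructor
  · intro hs
    obtain ⟨S, hS, hmem⟩ := Language.mem_kstar.1 hs
    obtain ⟨u, v, s₁, s₂, huv, hv, hu, rfl, h1, h2⟩ :=
      star_split L S hmem (a :: w) s (by simp) hS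
    exact ⟨lquot L v * L∗, ⟨u, v, huv, hv, hu, rfl⟩,
      ⟨s₁, h1, s₂, h2, rfl⟩⟩
  · rintro ⟨K, ⟨u, v, huv, hv, hu, rfl⟩, hs⟩
    obtain ⟨s₁, h1, s₂, h2, rfl⟩ := hs
    obtain ⟨Su, hSu, hSumem⟩ := Language.mem_kstar.1 hu
    obtain ⟨Ss, hSs, hSsmem⟩ := Language.mem_kstar.1 h2
    refine Language.mem_kstar.2 ⟨Su ++ [v ++ s₁] ++ Ss, ?_, ?_⟩
    · simp [← huv, ← hSu, ← hSs, List.append_assoc]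
    · intro z hz
      simp only [List.mem_append, List.mem_singleton] at hz
      rcases hz with (hz | rfl) | hz
      · exact hSumem _ hz
      · exact h1
      · exact hSsmem _ hz

lemma lquot_zero (w : List α) : lquot (0 : Language α) w = ⊥ := rfl

lemma lquot_one_cons (a : α) (w : List α) : lquot (1 : Language α) (a :: w) = ⊥ := by
  ext s
  simp only [mem_lquot, Language.mem_one]
  exact iff_of_false (by simp) id

theorem finite_range_lquot (p : RegularExpression α) :
    (Set.range (lquot p.matches')).Finite := by
  induction p with
  | zero =>
      refine (Set.finite_singleton (⊥ : Language α)).subset ?_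
      rintro _ ⟨w, rfl⟩
      exact lquot_zero w
  | epsilon =>
      refine ((Set.finite_singleton (⊥ : Language α)).insert 1).subset ?_
      rintro _ ⟨w, rfl⟩
      change lquot (1 : Language α) w ∈ _
      cases w with
      | nil => left; rfl
      | cons a w => right; exact lquot_one_cons a w
  | char a =>
      refine (Set.Finite.insert ({[a]} : Language α)
        ((Set.finite_singleton (⊥ : Language α)).insert 1)).subset ?_
      rintro _ ⟨w, rfl⟩
      change lquot ({[a]} : Language α) w ∈ _
      match w with
      | [] => left; rfl
      | [b] =>
          right
          rcases eq_or_ne b a with rfl | hb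
          · left
            ext s
            rw [mem_lquot, Language.mem_one]
            show b :: s = [b] ↔ s = []
            simp
          · right
            ext s
            refine iff_of_false (fun h => hb ?_) id
            exact (List.cons_eq_cons.1 (show b :: s = [a] from h)).1
      | b :: c :: w =>
          right; right
          ext s
          refine iff_of_false (fun h => ?_) id
          simpa using (show b :: c :: (w ++ s) = [a] from h)
  | plus p q hp hq =>
      refine (hp.image2 (fun l m : Language α => l + m) hq).subset ?_
      rintro _ ⟨w, rfl⟩
      change lquot (p.matches' + q.matches') w ∈ _
      rw [lquot_add]
      exact Set.mem_image2_of_mem ⟨w, rfl⟩ ⟨w, rfl⟩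
  | comp p q hp hq =>
      refine (hp.image2 (fun (l : Language α) (T : Set (Language α)) => l * q.matches' + sSup T)
        hq.finite_subsets).subset ?_
      rintro _ ⟨w, rfl⟩
      change lquot (p.matches' * q.matches') w ∈ _
      rw [lquot_mul]
      refine Set.mem_image2_of_mem ⟨w, rfl⟩ ?_
      rintro _ ⟨u, v, huv, hu, rfl⟩
      exact ⟨v, rfl⟩
  | star p hp =>
      refine (Set.Finite.insert (p.matches'∗)
        (((hp.image (fun l => l * p.matches'∗)).finite_subsets).image sSup)).subset ?_
      rintro _ ⟨w, rfl⟩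
      change lquot (p.matches'∗) w ∈ _
      cases w with
      | nil => left; rfl
      | cons a w =>
          right
          rw [lquot_star]
          refine ⟨_, ?_, rfl⟩
          rintro _ ⟨u, v, huv, hv, hu, rfl⟩
          exact ⟨lquot p.matches' v, ⟨v, rfl⟩, rfl⟩

theorem exists_length_with_repeating_prefixes [DecidableEq α] (p q : RegularExpression α) :
    ∃ k : ℕ, ∀ w : List α, w.length = k →
      ∃ s₁ s₂ : List α, s₁ <+: s₂ ∧ s₁ ≠ s₂ ∧ s₂ <+: w ∧
        (derivs p s₁).matches' = (derivs p s₂).matches' ∧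
        (derivs q s₁).matches' = (derivs q s₂).matches' := by
  classical
  have hfin : ((Set.range (lquot p.matches')) ×ˢ (Set.range (lquot q.matches'))).Finite :=
    (finite_range_lquot p).prod (finite_range_lquot q)
  set F := hfin.toFinset with hF
  refine ⟨F.card, fun w hw => ?_⟩
  set f : ℕ → Language α × Language α :=
    fun i => (lquot p.matches' (w.take i), lquot q.matches' (w.take i)) with hf
  have hmaps : ∀ i ∈ Finset.range (F.card + 1), f i ∈ F := by
    intro i _
    rw [hF, Set.Finite.mem_toFinset]
    exact ⟨⟨w.take i, rfl⟩, ⟨w.take i, rfl⟩⟩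
  obtain ⟨i, hi, j, hj, hij, hfeq⟩ :=
    Finset.exists_ne_map_eq_of_card_lt_of_maps_to (by simp) hmaps
  have key : ∀ i j : ℕ, j ∈ Finset.range (F.card + 1) → i < j → f i = f j →
      ∃ s₁ s₂ : List α, s₁ <+: s₂ ∧ s₁ ≠ s₂ ∧ s₂ <+: w ∧
        (derivs p s₁).matches' = (derivs p s₂).matches' ∧
        (derivs q s₁).matches' = (derivs q s₂).matches' := by
    intro i j hj hlt heq
    have hjlen : j ≤ w.length := by
      rw [hw]
      exact Nat.lt_succ_iff.1 (Finset.mem_range.1 hj)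
    refine ⟨w.take i, w.take j, ?_, ?_, List.take_prefix j w, ?_, ?_⟩
    · have h1 := List.take_prefix i (w.take j)
      rwa [List.take_take, Nat.min_eq_left hlt.le] at h1
    · intro hcon
      have := congrArg List.length hcon
      rw [List.length_take, List.length_take, Nat.min_eq_left (hlt.le.trans hjlen),
        Nat.min_eq_left hjlen] at this
      exact absurd this hlt.ne
    · rw [matches'_derivs, matches'_derivs]
      exact congrArg Prod.fst heq
    · rw [matches'_derivs, matches'_derivs]
      exact congrArg Prod.snd heq
  rcases lt_or_gt_of_ne hij with h | h
  · exact key i j hj h hfeq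
  · exact key j i hi h hfeq.symm
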